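/- Triangle inequality for the interventional superresolution information loss (ISIL) error under composition of abstractions: D(μ'', β_Y·α_Y·μ·α_X⁺·β_X⁺) ≤ D(μ', α_Y·μ·α_X⁺) + D(μ'', β_Y·μ'·β_X⁺), where γ⁺ = γᵀ·(γ·γᵀ)⁻¹ denotes the pseudo-inverse of an abstraction matrix γ. -/

import Mathlib

open Finset Matrix

noncomputable section

/-- A probability vector on a finite type: nonnegative entries summing to 1. -/
def IsProbVec {X : Type*} [Fintype X] (p : X → ℝ) : Prop :=
  (∀ x, 0 ≤ p x) ∧ ∑ x, p x = 1

/-- Kullback–Leibler divergence, with the convention that terms with `p x = 0`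
contribute `0`. -/
noncomputable def KL {X : Type*} [Fintype X] (p q : X → ℝ) : ℝ :=
  ∑ x, if p x = 0 then 0 else p x * Real.log (p x / q x)

/-- Jensen–Shannon distance. -/
noncomputable def JSD {X : Type*} [Fintype X] (p q : X → ℝ) : ℝ :=
  Real.sqrt ((1 / 2) * KL p (fun x => (p x + q x) / 2)
    + (1 / 2) * KL q (fun x => (p x + q x) / 2))

/-- A column-stochastic matrix: nonnegative entries, every column sums to 1. -/
def IsColStoch {Y X : Type*} [Fintype Y] [Fintype X] (M : Matrix Y X ℝ) : Prop :=
  (∀ y x, 0 ≤ M y x) ∧ ∀ x, ∑ y, M y x = 1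

/-- The sup-JSD distance between two matrices of the same shape:
the maximum over columns of the JSD between corresponding columns. -/
noncomputable def supJSD {Y X : Type*} [Fintype Y] [Fintype X] [Nonempty X]
    (M N : Matrix Y X ℝ) : ℝ :=
  Finset.univ.sup' Finset.univ_nonempty fun x => JSD (fun y => M y x) (fun y => N y x)

/-- An abstraction matrix: entries in {0,1}, every column contains exactly one 1,
and every row contains at least one 1. -/
def IsAbsMatrix {N M : Type*} [Fintype N] [Fintype M] (α : Matrix N M ℝ) : Prop :=
  (∀ j i, α j i = 0 ∨ α j i = 1) ∧ (∀ i, ∃! j, α j i = 1) ∧ (∀ j, ∃ i, α j i = 1)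

/-- The pseudo-inverse `α⁺ = αᵀ·(α·αᵀ)⁻¹` of an abstraction matrix. -/
noncomputable def pinv {N M : Type*} [Fintype N] [Fintype M] [DecidableEq N]
    (α : Matrix N M ℝ) : Matrix M N ℝ :=
  αᵀ * (α * αᵀ)⁻¹

namespace IsilAux

noncomputable def F (a b : ℝ) : ℝ :=
  (a * Real.log a + b * Real.log b - (a + b) * Real.log (a + b) + (a + b) * Real.log 2) / 2

lemma log_half (x : ℝ) : x * Real.log (x / 2) = x * Real.log x - x * Real.log 2 := by
  rcases eq_or_ne x 0 with h | h
  · simp [h]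
  · rw [Real.log_div h two_ne_zero]; ring

lemma F_eq_phi (a b : ℝ) :
    F a b = ((a * Real.log a - a * Real.log ((a + b) / 2))
      + (b * Real.log b - b * Real.log ((a + b) / 2))) / 2 := by
  have h := log_half (a + b)
  unfold F
  have h2 : a * Real.log ((a + b) / 2) + b * Real.log ((a + b) / 2)
      = (a + b) * Real.log (a + b) - (a + b) * Real.log 2 := by
    rw [← add_mul]; exact h
  linarith

lemma F_symm (a b : ℝ) : F a b = F b a := by
  unfold F; rw [add_comm b a]; ring

lemma F_self (a : ℝ) : F a a = 0 := by
  rcases eq_or_ne a 0 with h | h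
  · simp [F, h]
  · unfold F
    have : a + a = 2 * a := by ring
    rw [this, Real.log_mul two_ne_zero h]
    ring

lemma F_homog {k : ℝ} (hk : 0 ≤ k) (a b : ℝ) : F (k * a) (k * b) = k * F a b := by
  rcases hk.eq_or_lt with h | h
  · simp [F, ← h]
  · have key : ∀ x : ℝ, (k * x) * Real.log (k * x) = k * (x * Real.log x) + k * x * Real.log k := by
      intro x
      rcases eq_or_ne x 0 with hx | hx
      · simp [hx]
      · rw [Real.log_mul h.ne' hx]; ring
    unfold F
    rw [show k * a + k * b = k * (a + b) by ring, key a, key b, key (a + b)]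
    ring
lemma logsum {ι : Type*} [Fintype ι] (p q : ι → ℝ) (hp : ∀ i, 0 ≤ p i)
    (hq : ∀ i, 0 ≤ q i) (h0 : ∀ i, q i = 0 → p i = 0) :
    (∑ i, p i) * Real.log (∑ i, p i) - (∑ i, p i) * Real.log (∑ i, q i)
      ≤ ∑ i, (p i * Real.log (p i) - p i * Real.log (q i)) := by
  set S := ∑ i, p i with hS
  set T := ∑ i, q i with hT
  have hS0 : 0 ≤ S := Finset.sum_nonneg fun i _ => hp i
  rcases hS0.eq_or_lt with h | hSpos
  · have hall : ∀ i ∈ Finset.univ, p i = 0 :=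
      (Finset.sum_eq_zero_iff_of_nonneg (fun i _ => hp i)).1 h.symm
    have : ∀ i ∈ Finset.univ, p i * Real.log (p i) - p i * Real.log (q i) = 0 := by
      intro i hi; simp [hall i hi]
    rw [Finset.sum_congr rfl this]
    simp [← h]
  · have hTpos : 0 < T := by
      rcases (Finset.sum_nonneg fun i _ => hq i : (0:ℝ) ≤ T).eq_or_lt with h | h
      · exfalso
        have hq0 : ∀ i ∈ Finset.univ, q i = 0 :=
          (Finset.sum_eq_zero_iff_of_nonneg (fun i _ => hq i)).1 h.symm
        have : S = 0 := Finset.sum_eq_zero fun i hi => h0 i (hq0 i hi)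
        linarith
      · exact h
    have key : ∀ i ∈ Finset.univ,
        p i * Real.log S - p i * Real.log T + (p i - q i * (S / T))
          ≤ p i * Real.log (p i) - p i * Real.log (q i) := by
      intro i _
      rcases (hp i).eq_or_lt with hpi | hpi
      · have : (0:ℝ) ≤ q i * (S / T) := mul_nonneg (hq i) (div_nonneg hS0 hTpos.le)
        simp [← hpi]; nlinarith
      · have hqi : 0 < q i := by
          rcases (hq i).eq_or_lt with h | h
          · exact absurd (h0 i h.symm) (ne_of_gt hpi)
          · exact h
        have harg : (0:ℝ) < q i * S / (p i * T) := by positivity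
        have hlog := Real.log_le_sub_one_of_pos harg
        have hexp : Real.log (q i * S / (p i * T))
            = Real.log (q i) + Real.log S - (Real.log (p i) + Real.log T) := by
          rw [Real.log_div (by positivity) (by positivity),
            Real.log_mul hqi.ne' hSpos.ne', Real.log_mul hpi.ne' hTpos.ne']
        rw [hexp] at hlog
        have hcan : p i * (q i * S / (p i * T)) = q i * (S / T) := by
          field_simp
        have := mul_le_mul_of_nonneg_left hlog (hp i)
        nlinarith [this, hcan]
    have hsum := Finset.sum_le_sum key
    have hleft : ∑ i, (p i * Real.log S - p i * Real.log T + (p i - q i * (S / T)))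
        = S * Real.log S - S * Real.log T + (S - T * (S / T)) := by
      rw [Finset.sum_add_distrib, Finset.sum_sub_distrib, Finset.sum_sub_distrib,
        ← Finset.sum_mul, ← Finset.sum_mul, ← Finset.sum_mul]
    have hTS : T * (S / T) = S := by field_simp
    rw [hleft, hTS] at hsum
    linarith
lemma F_nonneg {a b : ℝ} (ha : 0 ≤ a) (hb : 0 ≤ b) : 0 ≤ F a b := by
  rcases eq_or_lt_of_le (by linarith : (0:ℝ) ≤ a + b) with h | hab
  · have ha0 : a = 0 := by linarith
    have hb0 : b = 0 := by linarith
    simp [F, ha0, hb0]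
  · set m := (a + b) / 2 with hm
    have hmpos : 0 < m := by positivity
    have claim : ∀ x : ℝ, 0 ≤ x → x - m ≤ x * Real.log x - x * Real.log m := by
      intro x hx
      rcases hx.eq_or_lt with h | h
      · simp [← h]; linarith
      · have hlog := Real.log_le_sub_one_of_pos (by positivity : (0:ℝ) < m / x)
        rw [Real.log_div hmpos.ne' h.ne'] at hlog
        have := mul_le_mul_of_nonneg_left hlog h.le
        have hcan : x * (m / x - 1) = m - x := by field_simp
        nlinarith
    have h1 := claim a ha
    have h2 := claim b hb
    rw [F_eq_phi]
    have : a - m + (b - m) = 0 := by rw [hm]; ring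
    linarith

lemma F_subadd {ι : Type*} [Fintype ι] (p q : ι → ℝ) (hp : ∀ i, 0 ≤ p i)
    (hq : ∀ i, 0 ≤ q i) :
    F (∑ i, p i) (∑ i, q i) ≤ ∑ i, F (p i) (q i) := by
  set m : ι → ℝ := fun i => (p i + q i) / 2 with hmdef
  have hm : ∀ i, 0 ≤ m i := fun i => by have := hp i; have := hq i; positivity
  have hsum : ∑ i, m i = (∑ i, p i + ∑ i, q i) / 2 := by
    rw [hmdef, ← Finset.sum_add_distrib]; simp [Finset.sum_div]
  have h0p : ∀ i, m i = 0 → p i = 0 := by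
    intro i h; have := hp i; have := hq i
    simp only [hmdef] at h; linarith
  have h0q : ∀ i, m i = 0 → q i = 0 := by
    intro i h; have := hp i; have := hq i
    simp only [hmdef] at h; linarith
  have h1 := logsum p m hp hm h0p
  have h2 := logsum q m hq hm h0q
  rw [hsum] at h1 h2
  have hrw : ∀ i, F (p i) (q i)
      = ((p i * Real.log (p i) - p i * Real.log (m i))
        + (q i * Real.log (q i) - q i * Real.log (m i))) / 2 := by
    intro i; rw [F_eq_phi]
  calc F (∑ i, p i) (∑ i, q i)
      = ((∑ i, p i) * Real.log (∑ i, p i)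
          - (∑ i, p i) * Real.log ((∑ i, p i + ∑ i, q i) / 2)
        + ((∑ i, q i) * Real.log (∑ i, q i)
          - (∑ i, q i) * Real.log ((∑ i, p i + ∑ i, q i) / 2))) / 2 := F_eq_phi _ _
    _ ≤ ((∑ i, (p i * Real.log (p i) - p i * Real.log (m i)))
        + (∑ i, (q i * Real.log (q i) - q i * Real.log (m i)))) / 2 := by linarith
    _ = ∑ i, F (p i) (q i) := by
        rw [← Finset.sum_add_distrib, Finset.sum_div]
        exact Finset.sum_congr rfl fun i _ => (hrw i).symm
noncomputable def Hf (s : ℝ) : ℝ :=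
  2 * s * Real.log s - (1 + s) * (Real.log (s ^ 2 + 1) - Real.log 2)

noncomputable def Hf' (s : ℝ) : ℝ :=
  2 * Real.log s + 2 - (Real.log (s ^ 2 + 1) - Real.log 2)
    - (1 + s) * (2 * s / (s ^ 2 + 1))

lemma sq_add_one_pos (s : ℝ) : (0:ℝ) < s ^ 2 + 1 := by positivity

lemma hasDerivAt_sq_add_one (s : ℝ) : HasDerivAt (fun s : ℝ => s ^ 2 + 1) (2 * s) s := by
  simpa using (hasDerivAt_pow 2 s).add_const 1

lemma hasDerivAt_log_sq_add_one (s : ℝ) :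
    HasDerivAt (fun s : ℝ => Real.log (s ^ 2 + 1)) (2 * s / (s ^ 2 + 1)) s :=
  (hasDerivAt_sq_add_one s).log (sq_add_one_pos s).ne'

lemma hasDerivAt_Hf {s : ℝ} (hs : 0 < s) : HasDerivAt Hf (Hf' s) s := by
  have h1 : HasDerivAt (fun s : ℝ => 2 * s * Real.log s) (2 * Real.log s + 2) s := by
    have h2 := ((hasDerivAt_id s).mul (Real.hasDerivAt_log hs.ne')).const_mul (2:ℝ)
    simp only [id_eq] at h2
    replace h2 : HasDerivAt (fun y : ℝ => 2 * (y * Real.log y)) _ s := h2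
    have hne := hs.ne'
    convert h2 using 1
    · funext x; ring
    · rw [mul_inv_cancel₀ hne]; ring
  have h3 : HasDerivAt (fun s : ℝ => (1 + s) * (Real.log (s ^ 2 + 1) - Real.log 2))
      (1 * (Real.log (s ^ 2 + 1) - Real.log 2) + (1 + s) * (2 * s / (s ^ 2 + 1))) s := by
    exact (((hasDerivAt_id s).const_add 1).mul
      ((hasDerivAt_log_sq_add_one s).sub_const (Real.log 2)))
  have : HasDerivAt Hf _ s := h1.sub h3
  convert this using 1
  unfold Hf'
  ring

lemma hasDerivAt_Hf' {s : ℝ} (hs : 0 < s) :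
    HasDerivAt Hf' (2 * (1 - s) ^ 2 * (1 + s) / (s * (s ^ 2 + 1) ^ 2)) s := by
  have h1 : HasDerivAt (fun s : ℝ => 2 * Real.log s) (2 / s) s := by
    simpa [div_eq_mul_inv, mul_comm] using (Real.hasDerivAt_log hs.ne').const_mul (2:ℝ)
  have hq : HasDerivAt (fun s : ℝ => 2 * s / (s ^ 2 + 1))
      ((2 * (s ^ 2 + 1) - 2 * s * (2 * s)) / (s ^ 2 + 1) ^ 2) s := by
    have h := (((hasDerivAt_id s).const_mul (2:ℝ)).div (hasDerivAt_sq_add_one s)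
      (sq_add_one_pos s).ne')
    simp only [id_eq] at h
    replace h : HasDerivAt (fun s : ℝ => 2 * s / (s ^ 2 + 1)) _ s := h
    convert h using 1
    ring
  have h3 : HasDerivAt (fun s : ℝ => (1 + s) * (2 * s / (s ^ 2 + 1)))
      (1 * (2 * s / (s ^ 2 + 1))
        + (1 + s) * ((2 * (s ^ 2 + 1) - 2 * s * (2 * s)) / (s ^ 2 + 1) ^ 2)) s :=
    ((hasDerivAt_id s).const_add 1).mul hq
  have hmain : HasDerivAt Hf' _ s := ((h1.add_const 2).sub
    ((hasDerivAt_log_sq_add_one s).sub_const (Real.log 2))).sub h3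
  convert hmain using 1
  have hne : (s:ℝ) ≠ 0 := hs.ne'
  have hne2 : (s ^ 2 + 1 : ℝ) ≠ 0 := (sq_add_one_pos s).ne'
  field_simp
  ring

lemma Hf'_nonpos {s : ℝ} (h0 : 0 < s) (h1 : s ≤ 1) : Hf' s ≤ 0 := by
  have hmono : MonotoneOn Hf' (Set.Ioi (0:ℝ)) := by
    apply monotoneOn_of_deriv_nonneg (convex_Ioi 0)
    · exact fun x hx => (hasDerivAt_Hf' hx).continuousAt.continuousWithinAt
    · intro x hx
      rw [interior_Ioi] at hx
      exact (hasDerivAt_Hf' hx).differentiableAt.differentiableWithinAt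
    · intro x hx
      rw [interior_Ioi] at hx
      rw [(hasDerivAt_Hf' hx).deriv]
      have : (0:ℝ) < x := hx
      positivity
  have hHf'1 : Hf' 1 = 0 := by
    unfold Hf'
    norm_num
  calc Hf' s ≤ Hf' 1 := hmono (Set.mem_Ioi.2 h0) (Set.mem_Ioi.2 one_pos) h1
    _ = 0 := hHf'1

lemma Hf_nonneg {s : ℝ} (h0 : 0 < s) (h1 : s ≤ 1) : 0 ≤ Hf s := by
  have hanti : AntitoneOn Hf (Set.Ioc (0:ℝ) 1) := by
    apply antitoneOn_of_deriv_nonpos (convex_Ioc 0 1)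
    · exact fun x hx => (hasDerivAt_Hf hx.1).continuousAt.continuousWithinAt
    · intro x hx
      rw [interior_Ioc] at hx
      exact (hasDerivAt_Hf hx.1).differentiableAt.differentiableWithinAt
    · intro x hx
      rw [interior_Ioc] at hx
      rw [(hasDerivAt_Hf hx.1).deriv]
      exact Hf'_nonpos hx.1 hx.2.le
  have hHf1 : Hf 1 = 0 := by
    unfold Hf; norm_num
  calc (0:ℝ) = Hf 1 := hHf1.symm
    _ ≤ Hf s := hanti (Set.mem_Ioc.2 ⟨h0, h1⟩) (Set.mem_Ioc.2 ⟨one_pos, le_refl 1⟩) h1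
noncomputable def rho (s : ℝ) : ℝ := F (s ^ 2) 1 / (1 - s) ^ 2

lemma Fsq_eq (s : ℝ) : F (s ^ 2) 1
    = (2 * s ^ 2 * Real.log s - (s ^ 2 + 1) * (Real.log (s ^ 2 + 1) - Real.log 2)) / 2 := by
  unfold F
  rw [Real.log_pow, Real.log_one]
  push_cast
  ring

lemma hasDerivAt_G {s : ℝ} (hs : 0 < s) :
    HasDerivAt (fun s : ℝ => F (s ^ 2) 1)
      (s * (2 * Real.log s - (Real.log (s ^ 2 + 1) - Real.log 2))) s := by
  have hfun : (fun s : ℝ => F (s ^ 2) 1)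
      = fun s => (2 * s ^ 2 * Real.log s
        - (s ^ 2 + 1) * (Real.log (s ^ 2 + 1) - Real.log 2)) / 2 := by
    funext x; exact Fsq_eq x
  rw [hfun]
  have h1 : HasDerivAt (fun s : ℝ => 2 * (s ^ 2 * Real.log s))
      (2 * (2 * s * Real.log s + s ^ 2 * s⁻¹)) s := by
    exact ((hasDerivAt_pow 2 s).mul (Real.hasDerivAt_log hs.ne')).const_mul 2 |>.congr_deriv
      (by push_cast; ring)
  have h2 : HasDerivAt (fun s : ℝ => (s ^ 2 + 1) * (Real.log (s ^ 2 + 1) - Real.log 2))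
      (2 * s * (Real.log (s ^ 2 + 1) - Real.log 2) + (s ^ 2 + 1) * (2 * s / (s ^ 2 + 1))) s :=
    (hasDerivAt_sq_add_one s).mul ((hasDerivAt_log_sq_add_one s).sub_const (Real.log 2))
  have h3 : (fun s : ℝ => (2 * (s ^ 2 * Real.log s)
      - (s ^ 2 + 1) * (Real.log (s ^ 2 + 1) - Real.log 2)) / 2)
      = fun s : ℝ => (2 * s ^ 2 * Real.log s
        - (s ^ 2 + 1) * (Real.log (s ^ 2 + 1) - Real.log 2)) / 2 := by
    funext x; ring
  rw [← h3]
  have : HasDerivAt (fun s : ℝ => (2 * (s ^ 2 * Real.log s)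
      - (s ^ 2 + 1) * (Real.log (s ^ 2 + 1) - Real.log 2)) / 2) _ s := (h1.sub h2).div_const 2
  convert this using 1
  have hne := hs.ne'
  have hne2 := (sq_add_one_pos s).ne'
  field_simp
  ring

lemma hasDerivAt_rho {s : ℝ} (h0 : 0 < s) (h1 : s < 1) :
    HasDerivAt rho (Hf s / (1 - s) ^ 3) s := by
  have hw : HasDerivAt (fun s : ℝ => (1 - s) ^ 2) (2 * (1 - s) ^ 1 * (-1)) s := by
    exact (((hasDerivAt_id s).const_sub 1)).pow 2 |>.congr_deriv (by simp only [id_eq]; ring)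
  have hwne : ((1:ℝ) - s) ^ 2 ≠ 0 := by
    have : (0:ℝ) < 1 - s := by linarith
    positivity
  have hdiv : HasDerivAt (fun s : ℝ => F (s ^ 2) 1 / (1 - s) ^ 2) _ s :=
    (hasDerivAt_G h0).div hw hwne
  have : rho = fun s : ℝ => F (s ^ 2) 1 / (1 - s) ^ 2 := rfl
  rw [this]
  convert hdiv using 1
  rw [Fsq_eq]
  have hne := h0.ne'
  have hne2 := (sq_add_one_pos s).ne'
  have hne3 : (1:ℝ) - s ≠ 0 := by intro h; linarith [h]
  unfold Hf
  field_simp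
  ring

lemma continuous_Fsq : Continuous fun s : ℝ => F (s ^ 2) 1 := by
  have hF : (fun s : ℝ => F (s ^ 2) 1)
      = fun s : ℝ => (s ^ 2 * Real.log (s ^ 2) + 1 * Real.log 1
        - (s ^ 2 + 1) * Real.log (s ^ 2 + 1) + (s ^ 2 + 1) * Real.log 2) / 2 := rfl
  rw [hF]
  have c1 : Continuous fun s : ℝ => s ^ 2 * Real.log (s ^ 2) :=
    Real.continuous_mul_log.comp (continuous_pow 2)
  have c2 : Continuous fun s : ℝ => (s ^ 2 + 1) * Real.log (s ^ 2 + 1) :=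
    Real.continuous_mul_log.comp ((continuous_pow 2).add continuous_const)
  have c3 : Continuous fun s : ℝ => (s ^ 2 + 1) * Real.log 2 :=
    ((continuous_pow 2).add continuous_const).mul continuous_const
  exact (((c1.add continuous_const).sub c2).add c3).div_const 2

lemma rho_nonneg {s : ℝ} (h0 : 0 ≤ s) : 0 ≤ rho s :=
  div_nonneg (F_nonneg (by positivity) zero_le_one) (by positivity)

lemma rho_mono : MonotoneOn rho (Set.Ico (0:ℝ) 1) := by
  apply monotoneOn_of_deriv_nonneg (convex_Ico 0 1)
  · apply ContinuousOn.div continuous_Fsq.continuousOn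
      ((continuous_const.sub continuous_id).pow 2).continuousOn
    intro x hx
    have : (0:ℝ) < 1 - x := by linarith [hx.2]
    exact pow_ne_zero 2 this.ne'
  · intro x hx
    rw [interior_Ico] at hx
    exact (hasDerivAt_rho hx.1 hx.2).differentiableAt.differentiableWithinAt
  · intro x hx
    rw [interior_Ico] at hx
    rw [(hasDerivAt_rho hx.1 hx.2).deriv]
    have h3 : (0:ℝ) < (1 - x) ^ 3 := by
      have : (0:ℝ) < 1 - x := by linarith [hx.2]
      positivity
    exact div_nonneg (Hf_nonneg hx.1 hx.2.le) h3.le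

lemma F_eq_rho {a b : ℝ} (ha : 0 ≤ a) (hab : a < b) :
    F a b = rho (Real.sqrt a / Real.sqrt b) * (Real.sqrt b - Real.sqrt a) ^ 2 := by
  have hb : 0 < b := lt_of_le_of_lt ha hab
  have hsb : 0 < Real.sqrt b := Real.sqrt_pos.2 hb
  have hsab : Real.sqrt a < Real.sqrt b := Real.sqrt_lt_sqrt ha hab
  set s := Real.sqrt a / Real.sqrt b with hs
  have hs2 : s ^ 2 = a / b := by
    rw [hs, div_pow, Real.sq_sqrt ha, Real.sq_sqrt hb.le]
  have h1s : (1 - s) ^ 2 = (Real.sqrt b - Real.sqrt a) ^ 2 / b := by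
    have : 1 - s = (Real.sqrt b - Real.sqrt a) / Real.sqrt b := by
      rw [hs]; field_simp
    rw [this, div_pow, Real.sq_sqrt hb.le]
  have hF : F a b = b * F (a / b) 1 := by
    have := F_homog hb.le (a / b) 1
    rw [mul_div_cancel₀ _ hb.ne', mul_one] at this
    rw [this]
  rw [hF]
  unfold rho
  rw [hs2, h1s]
  have hne : (Real.sqrt b - Real.sqrt a) ^ 2 ≠ 0 := by
    have : (0:ℝ) < Real.sqrt b - Real.sqrt a := by linarith
    positivity
  rw [div_div_eq_mul_div, div_mul_cancel₀ _ hne]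
  ring

lemma continuous_Fb (a : ℝ) : Continuous fun b : ℝ => F a b := by
  have hF : (fun b : ℝ => F a b)
      = fun b : ℝ => (a * Real.log a + b * Real.log b
        - (a + b) * Real.log (a + b) + (a + b) * Real.log 2) / 2 := rfl
  rw [hF]
  have c1 : Continuous fun b : ℝ => b * Real.log b := Real.continuous_mul_log
  have c2 : Continuous fun b : ℝ => (a + b) * Real.log (a + b) :=
    Real.continuous_mul_log.comp (continuous_const.add continuous_id)
  have c3 : Continuous fun b : ℝ => (a + b) * Real.log 2 :=
    (continuous_const.add continuous_id).mul continuous_const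
  exact (((continuous_const.add c1).sub c2).add c3).div_const 2

lemma hasDerivAt_Fb {a b : ℝ} (hb : 0 < b) (hab : 0 < a + b) :
    HasDerivAt (fun b => F a b)
      ((Real.log b - Real.log (a + b) + Real.log 2) / 2) b := by
  have h1 : HasDerivAt (fun b : ℝ => b * Real.log b) (Real.log b + 1) b := by
    have : HasDerivAt (fun b : ℝ => b * Real.log b) _ b :=
      (hasDerivAt_id b).mul (Real.hasDerivAt_log hb.ne')
    simpa [id_eq, hb.ne'] using this
  have hab' : HasDerivAt (fun b : ℝ => a + b) 1 b := (hasDerivAt_id b).const_add a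
  have h2 : HasDerivAt (fun b : ℝ => (a + b) * Real.log (a + b))
      (Real.log (a + b) + 1) b := by
    have := hab'.mul (hab'.log hab.ne')
    have heq : 1 * Real.log (a + b) + (a + b) * (1 / (a + b)) = Real.log (a + b) + 1 := by
      field_simp
    rwa [heq] at this
  have h3 : HasDerivAt (fun b : ℝ => (a + b) * Real.log 2) (Real.log 2) b := by
    simpa using hab'.mul_const (Real.log 2)
  have h0 : HasDerivAt (fun _ : ℝ => a * Real.log a) 0 b := hasDerivAt_const _ _
  have : HasDerivAt (fun b => F a b) _ b := (((h0.add h1).sub h2).add h3).div_const 2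
  convert this using 1
  ring

lemma F_mono_right {a : ℝ} (ha : 0 ≤ a) : MonotoneOn (fun b => F a b) (Set.Ici a) := by
  rcases ha.eq_or_lt with h | hapos
  · -- a = 0 : F 0 b = b * log 2 / 2 on b ≥ 0
    subst h
    apply monotoneOn_of_deriv_nonneg (convex_Ici 0) (continuous_Fb 0).continuousOn
    · intro x hx
      rw [interior_Ici] at hx
      exact (hasDerivAt_Fb hx (by simpa using hx)).differentiableAt.differentiableWithinAt
    · intro x hx
      rw [interior_Ici] at hx
      rw [(hasDerivAt_Fb hx (by simpa using hx)).deriv]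
      have : Real.log x - Real.log (0 + x) = 0 := by rw [zero_add]; ring
      have hl2 : (0:ℝ) ≤ Real.log 2 := Real.log_nonneg (by norm_num)
      rw [zero_add]
      linarith
  · apply monotoneOn_of_deriv_nonneg (convex_Ici a) (continuous_Fb a).continuousOn
    · intro x hx
      rw [interior_Ici] at hx
      have hx' : 0 < x := lt_trans hapos hx
      exact (hasDerivAt_Fb hx' (by linarith)).differentiableAt.differentiableWithinAt
    · intro x hx
      rw [interior_Ici] at hx
      have hx' : 0 < x := lt_trans hapos hx
      rw [(hasDerivAt_Fb hx' (by linarith)).deriv]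
      have h2x : Real.log (a + x) ≤ Real.log (2 * x) := by
        apply Real.log_le_log (by linarith)
        linarith [le_of_lt (Set.mem_Ioi.mp hx)]
      rw [Real.log_mul two_ne_zero hx'.ne'] at h2x
      linarith

lemma F_anti_right {a : ℝ} (ha : 0 < a) : AntitoneOn (fun b => F a b) (Set.Icc 0 a) := by
  apply antitoneOn_of_deriv_nonpos (convex_Icc 0 a) (continuous_Fb a).continuousOn
  · intro x hx
    rw [interior_Icc] at hx
    exact (hasDerivAt_Fb hx.1 (by linarith [hx.1])).differentiableAt.differentiableWithinAt
  · intro x hx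
    rw [interior_Icc] at hx
    rw [(hasDerivAt_Fb hx.1 (by linarith [hx.1])).deriv]
    have h2x : Real.log (2 * x) ≤ Real.log (a + x) := by
      apply Real.log_le_log (by linarith [hx.1])
      linarith [hx.2]
    rw [Real.log_mul two_ne_zero hx.1.ne'] at h2x
    linarith

lemma sqrtF_eq_rho {a b : ℝ} (ha : 0 ≤ a) (hab : a < b) :
    Real.sqrt (F a b)
      = Real.sqrt (rho (Real.sqrt a / Real.sqrt b)) * (Real.sqrt b - Real.sqrt a) := by
  rw [F_eq_rho ha hab, Real.sqrt_mul (rho_nonneg (by positivity)), Real.sqrt_sq]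
  have := Real.sqrt_le_sqrt hab.le
  linarith [Real.sqrt_le_sqrt hab.le]

lemma tri_mid {a b c : ℝ} (ha : 0 ≤ a) (hab : a ≤ b) (hbc : b ≤ c) :
    Real.sqrt (F a c) ≤ Real.sqrt (F a b) + Real.sqrt (F b c) := by
  rcases hab.eq_or_lt with h | hab'
  · subst h; rw [F_self]; simp [Real.sqrt_nonneg]
  rcases hbc.eq_or_lt with h | hbc'
  · subst h; rw [F_self]; simp [Real.sqrt_nonneg]
  have hb : 0 < b := lt_of_le_of_lt ha hab'
  have hc : 0 < c := lt_trans hb hbc'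
  have hac : a < c := lt_trans hab' hbc'
  have hsb : 0 < Real.sqrt b := Real.sqrt_pos.2 hb
  have hsc : 0 < Real.sqrt c := Real.sqrt_pos.2 hc
  set sab := Real.sqrt a / Real.sqrt b with hsab
  set sbc := Real.sqrt b / Real.sqrt c with hsbc
  set sac := Real.sqrt a / Real.sqrt c with hsac
  have hmem_ab : sab ∈ Set.Ico (0:ℝ) 1 := by
    constructor
    · positivity
    · rw [hsab, div_lt_one hsb]; exact Real.sqrt_lt_sqrt ha hab'
  have hmem_bc : sbc ∈ Set.Ico (0:ℝ) 1 := by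
    constructor
    · positivity
    · rw [hsbc, div_lt_one hsc]; exact Real.sqrt_lt_sqrt hb.le hbc'
  have hmem_ac : sac ∈ Set.Ico (0:ℝ) 1 := by
    constructor
    · positivity
    · rw [hsac, div_lt_one hsc]; exact Real.sqrt_lt_sqrt ha hac
  have h1 : sac ≤ sab := by
    rw [hsac, hsab]
    apply div_le_div_of_nonneg_left (Real.sqrt_nonneg a) hsb
    exact Real.sqrt_le_sqrt hbc
  have h2 : sac ≤ sbc := by
    rw [hsac, hsbc]
    exact (div_le_div_iff_of_pos_right hsc).mpr (Real.sqrt_le_sqrt hab)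
  have hr1 : rho sac ≤ rho sab := rho_mono hmem_ac hmem_ab h1
  have hr2 : rho sac ≤ rho sbc := rho_mono hmem_ac hmem_bc h2
  have hs1 : Real.sqrt (rho sac) ≤ Real.sqrt (rho sab) := Real.sqrt_le_sqrt hr1
  have hs2 : Real.sqrt (rho sac) ≤ Real.sqrt (rho sbc) := Real.sqrt_le_sqrt hr2
  rw [sqrtF_eq_rho ha hab', sqrtF_eq_rho hb.le hbc', sqrtF_eq_rho ha hac]
  have hgap1 : (0:ℝ) ≤ Real.sqrt b - Real.sqrt a := by
    linarith [Real.sqrt_le_sqrt hab]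
  have hgap2 : (0:ℝ) ≤ Real.sqrt c - Real.sqrt b := by
    linarith [Real.sqrt_le_sqrt hbc]
  nlinarith [mul_le_mul_of_nonneg_right hs1 hgap1, mul_le_mul_of_nonneg_right hs2 hgap2]

lemma tri_aux {a b c : ℝ} (ha : 0 ≤ a) (hb : 0 ≤ b) (hc : 0 ≤ c) (hac : a ≤ c) :
    Real.sqrt (F a c) ≤ Real.sqrt (F a b) + Real.sqrt (F b c) := by
  rcases le_or_gt b a with hba | hab
  · -- b ≤ a ≤ c : F b c ≥ F a c
    rcases hc.eq_or_lt with h | hcpos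
    · have ha0 : a = 0 := le_antisymm (h ▸ hac) ha
      have hb0 : b = 0 := le_antisymm (ha0 ▸ hba) hb
      rw [ha0, ← h, hb0, F_self]
      simp [Real.sqrt_nonneg]
    · have hFm : F c a ≤ F c b := by
        exact F_anti_right hcpos ⟨hb, le_trans hba hac⟩ ⟨ha, hac⟩ hba
      rw [F_symm a c]
      calc Real.sqrt (F c a) ≤ Real.sqrt (F c b) := Real.sqrt_le_sqrt hFm
        _ = Real.sqrt (F b c) := by rw [F_symm]
        _ ≤ Real.sqrt (F a b) + Real.sqrt (F b c) := by
            linarith [Real.sqrt_nonneg (F a b)]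
  · rcases le_or_gt c b with hcb | hbc
    · have hFm : F a c ≤ F a b := F_mono_right ha hac (le_trans hac hcb) hcb
      calc Real.sqrt (F a c) ≤ Real.sqrt (F a b) := Real.sqrt_le_sqrt hFm
        _ ≤ Real.sqrt (F a b) + Real.sqrt (F b c) := by
            linarith [Real.sqrt_nonneg (F b c)]
    · exact tri_mid ha hab.le hbc.le

lemma tri_scalar {a b c : ℝ} (ha : 0 ≤ a) (hb : 0 ≤ b) (hc : 0 ≤ c) :
    Real.sqrt (F a c) ≤ Real.sqrt (F a b) + Real.sqrt (F b c) := by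
  rcases le_total a c with h | h
  · exact tri_aux ha hb hc h
  · have := tri_aux hc hb ha h
    rw [F_symm c a, F_symm c b, F_symm b a] at this
    linarith
/-! pointwise identification of JSD with F -/

lemma F_eq_if {a b : ℝ} (ha : 0 ≤ a) (hb : 0 ≤ b) :
    (1 / 2) * (if a = 0 then (0:ℝ) else a * Real.log (a / ((a + b) / 2)))
      + (1 / 2) * (if b = 0 then (0:ℝ) else b * Real.log (b / ((a + b) / 2))) = F a b := by
  rcases eq_or_ne a 0 with ha0 | ha0 <;> rcases eq_or_ne b 0 with hb0 | hb0
  · simp [ha0, hb0, F]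
  · have hbpos : 0 < b := lt_of_le_of_ne hb (Ne.symm hb0)
    rw [if_pos ha0, if_neg hb0, ha0]
    have harg : b / ((0 + b) / 2) = 2 := by field_simp; ring
    rw [harg]
    unfold F
    simp only [zero_add, Real.log_zero, zero_mul, mul_zero]
    ring
  · have hapos : 0 < a := lt_of_le_of_ne ha (Ne.symm ha0)
    rw [if_neg ha0, if_pos hb0, hb0]
    have harg : a / ((a + 0) / 2) = 2 := by field_simp; ring
    rw [harg]
    unfold F
    simp only [add_zero, Real.log_zero, zero_mul, mul_zero]
    ring
  · have hapos : 0 < a := lt_of_le_of_ne ha (Ne.symm ha0)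
    have hbpos : 0 < b := lt_of_le_of_ne hb (Ne.symm hb0)
    have habpos : 0 < a + b := by linarith
    rw [if_neg ha0, if_neg hb0]
    have e1 : a / ((a + b) / 2) = 2 * a / (a + b) := by field_simp
    have e2 : b / ((a + b) / 2) = 2 * b / (a + b) := by field_simp
    rw [e1, e2, Real.log_div (by positivity) habpos.ne',
      Real.log_div (by positivity) habpos.ne',
      Real.log_mul two_ne_zero ha0, Real.log_mul two_ne_zero hb0]
    unfold F
    ring

lemma JSD_eq_sqrt_sumF {X : Type*} [Fintype X] (p q : X → ℝ)
    (hp : ∀ x, 0 ≤ p x) (hq : ∀ x, 0 ≤ q x) :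
    JSD p q = Real.sqrt (∑ x, F (p x) (q x)) := by
  unfold JSD KL
  congr 1
  rw [Finset.mul_sum, Finset.mul_sum, ← Finset.sum_add_distrib]
  exact Finset.sum_congr rfl fun x _ => F_eq_if (hp x) (hq x)

lemma JSD_nonneg {X : Type*} [Fintype X] (p q : X → ℝ) : 0 ≤ JSD p q :=
  Real.sqrt_nonneg _

/-! Minkowski -/

lemma minkowski {ι : Type*} [Fintype ι] (u v : ι → ℝ) (hu : ∀ i, 0 ≤ u i)
    (hv : ∀ i, 0 ≤ v i) :
    Real.sqrt (∑ i, (u i + v i) ^ 2)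
      ≤ Real.sqrt (∑ i, u i ^ 2) + Real.sqrt (∑ i, v i ^ 2) := by
  set A := Real.sqrt (∑ i, u i ^ 2) with hA
  set B := Real.sqrt (∑ i, v i ^ 2) with hB
  have hA0 : 0 ≤ A := Real.sqrt_nonneg _
  have hB0 : 0 ≤ B := Real.sqrt_nonneg _
  have hsu : ∑ i, u i ^ 2 = A ^ 2 := (Real.sq_sqrt (by positivity)).symm
  have hsv : ∑ i, v i ^ 2 = B ^ 2 := (Real.sq_sqrt (by positivity)).symm
  have hcs : ∑ i, u i * v i ≤ A * B := by
    have h := Finset.sum_mul_sq_le_sq_mul_sq Finset.univ u v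
    have h2 : (∑ i, u i * v i) ^ 2 ≤ (A * B) ^ 2 := by
      calc (∑ i, u i * v i) ^ 2 ≤ (∑ i, u i ^ 2) * (∑ i, v i ^ 2) := h
        _ = (A * B) ^ 2 := by rw [hsu, hsv]; ring
    have hsum0 : 0 ≤ ∑ i, u i * v i :=
      Finset.sum_nonneg fun i _ => mul_nonneg (hu i) (hv i)
    exact (pow_le_pow_iff_left₀ hsum0 (mul_nonneg hA0 hB0) two_ne_zero).mp h2
  have hexp : ∑ i, (u i + v i) ^ 2 ≤ (A + B) ^ 2 := by
    have : ∑ i, (u i + v i) ^ 2 = ∑ i, u i ^ 2 + 2 * ∑ i, u i * v i + ∑ i, v i ^ 2 := by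
      rw [Finset.mul_sum, ← Finset.sum_add_distrib, ← Finset.sum_add_distrib]
      exact Finset.sum_congr rfl fun i _ => by ring
    rw [this, hsu, hsv]
    nlinarith
  calc Real.sqrt (∑ i, (u i + v i) ^ 2) ≤ Real.sqrt ((A + B) ^ 2) :=
        Real.sqrt_le_sqrt hexp
    _ = A + B := Real.sqrt_sq (by linarith)

/-! JSD triangle inequality -/

lemma JSD_tri {X : Type*} [Fintype X] (p q r : X → ℝ)
    (hp : ∀ x, 0 ≤ p x) (hq : ∀ x, 0 ≤ q x) (hr : ∀ x, 0 ≤ r x) :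
    JSD p r ≤ JSD p q + JSD q r := by
  rw [JSD_eq_sqrt_sumF p r hp hr, JSD_eq_sqrt_sumF p q hp hq, JSD_eq_sqrt_sumF q r hq hr]
  set u : X → ℝ := fun x => Real.sqrt (F (p x) (q x)) with hu
  set v : X → ℝ := fun x => Real.sqrt (F (q x) (r x)) with hv
  have hu0 : ∀ x, 0 ≤ u x := fun x => Real.sqrt_nonneg _
  have hv0 : ∀ x, 0 ≤ v x := fun x => Real.sqrt_nonneg _
  have step1 : ∑ x, F (p x) (r x) ≤ ∑ x, (u x + v x) ^ 2 := by
    apply Finset.sum_le_sum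
    intro x _
    have htri := tri_scalar (hp x) (hq x) (hr x)
    have h1 : F (p x) (r x) = Real.sqrt (F (p x) (r x)) ^ 2 :=
      (Real.sq_sqrt (F_nonneg (hp x) (hr x))).symm
    rw [h1]
    have h2 : (0:ℝ) ≤ Real.sqrt (F (p x) (r x)) := Real.sqrt_nonneg _
    nlinarith [htri, h2, hu0 x, hv0 x]
  have step2 := minkowski u v hu0 hv0
  have hu2 : ∑ x, u x ^ 2 = ∑ x, F (p x) (q x) :=
    Finset.sum_congr rfl fun x _ => Real.sq_sqrt (F_nonneg (hp x) (hq x))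
  have hv2 : ∑ x, v x ^ 2 = ∑ x, F (q x) (r x) :=
    Finset.sum_congr rfl fun x _ => Real.sq_sqrt (F_nonneg (hq x) (hr x))
  rw [hu2, hv2] at step2
  calc Real.sqrt (∑ x, F (p x) (r x)) ≤ Real.sqrt (∑ x, (u x + v x) ^ 2) :=
        Real.sqrt_le_sqrt step1
    _ ≤ _ := step2

/-! Matrix facts -/

lemma abs_colStoch {N M : Type*} [Fintype N] [Fintype M] {α : Matrix N M ℝ}
    (hα : IsAbsMatrix α) : IsColStoch α := by
  constructor
  · intro j i
    rcases hα.1 j i with h | h <;> simp [h]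
  · intro i
    obtain ⟨j₀, hj₀, huniq⟩ := hα.2.1 i
    rw [Finset.sum_eq_single j₀]
    · exact hj₀
    · intro j _ hne
      rcases hα.1 j i with h | h
      · exact h
      · exact absurd (huniq j h) hne
    · intro h; exact absurd (Finset.mem_univ j₀) h

lemma pinv_colStoch {N M : Type*} [Fintype N] [Fintype M] [DecidableEq N]
    {α : Matrix N M ℝ} (hα : IsAbsMatrix α) : IsColStoch (pinv α) := by
  classical
  set d : N → ℝ := fun j => ∑ i, α j i with hd
  have hdpos : ∀ j, 0 < d j := by
    intro j
    obtain ⟨i, hi⟩ := hα.2.2 j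
    have h1 : (1:ℝ) ≤ d j := by
      rw [hd, ← hi]
      exact Finset.single_le_sum (fun i _ => (abs_colStoch hα).1 j i) (Finset.mem_univ i)
    linarith
  have hdiag : α * αᵀ = Matrix.diagonal d := by
    ext j k
    rw [Matrix.mul_apply]
    by_cases hjk : j = k
    · subst hjk
      rw [Matrix.diagonal_apply_eq]
      apply Finset.sum_congr rfl
      intro i _
      rw [Matrix.transpose_apply]
      rcases hα.1 j i with h | h <;> rw [h] <;> ring
    · rw [Matrix.diagonal_apply_ne _ hjk]
      apply Finset.sum_eq_zero
      intro i _
      rw [Matrix.transpose_apply]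
      rcases hα.1 j i with h | h
      · rw [h]; ring
      · rcases hα.1 k i with h2 | h2
        · rw [h2]; ring
        · obtain ⟨j₀, _, huniq⟩ := hα.2.1 i
          exact absurd ((huniq j h).trans (huniq k h2).symm) hjk
  have hinv : (α * αᵀ)⁻¹ = Matrix.diagonal fun j => (d j)⁻¹ := by
    rw [hdiag]
    apply Matrix.inv_eq_right_inv
    rw [Matrix.diagonal_mul_diagonal]
    have : (fun j => d j * (d j)⁻¹) = fun _ => (1:ℝ) := by
      funext j; exact mul_inv_cancel₀ (hdpos j).ne'
    rw [this, Matrix.diagonal_one]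
  have hentry : ∀ i j, pinv α i j = α j i * (d j)⁻¹ := by
    intro i j
    unfold pinv
    rw [hinv, Matrix.mul_diagonal, Matrix.transpose_apply]
  constructor
  · intro i j
    rw [hentry]
    exact mul_nonneg ((abs_colStoch hα).1 j i) (inv_nonneg.2 (hdpos j).le)
  · intro j
    have : ∑ i, pinv α i j = (∑ i, α j i) * (d j)⁻¹ := by
      rw [Finset.sum_mul]
      exact Finset.sum_congr rfl fun i _ => hentry i j
    rw [this]
    exact mul_inv_cancel₀ (hdpos j).ne'

lemma mul_entries_nonneg {A B C : Type*} [Fintype A] [Fintype B] [Fintype C]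
    {M : Matrix A B ℝ} {N : Matrix B C ℝ} (hM : ∀ a b, 0 ≤ M a b)
    (hN : ∀ b c, 0 ≤ N b c) : ∀ a c, 0 ≤ (M * N) a c := by
  intro a c
  rw [Matrix.mul_apply]
  exact Finset.sum_nonneg fun b _ => mul_nonneg (hM a b) (hN b c)

/-! The mixture / data-processing bound -/

lemma supJSD_nonneg {Y X : Type*} [Fintype Y] [Fintype X] [Nonempty X]
    (M N : Matrix Y X ℝ) : 0 ≤ supJSD M N := by
  obtain ⟨x⟩ := (inferInstance : Nonempty X)
  calc (0:ℝ) ≤ JSD (fun y => M y x) (fun y => N y x) := JSD_nonneg _ _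
    _ ≤ supJSD M N := by
          unfold supJSD
          exact Finset.le_sup' (fun x => JSD (fun y => M y x) (fun y => N y x)) (Finset.mem_univ x)

lemma mix_bound {Y' X' Y'' X'' : Type*} [Fintype Y'] [Fintype X'] [Fintype Y''] [Fintype X'']
    [Nonempty X'] (T : Matrix Y'' Y' ℝ) (W : Matrix X' X'' ℝ) (P Q : Matrix Y' X' ℝ)
    (hT : IsColStoch T) (hW : IsColStoch W)
    (hP : ∀ y x, 0 ≤ P y x) (hQ : ∀ y x, 0 ≤ Q y x) (x'' : X'') :
    JSD (fun y'' => (T * P * W) y'' x'') (fun y'' => (T * Q * W) y'' x'')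
      ≤ supJSD P Q := by
  have hTP : ∀ y x, 0 ≤ (T * P * W) y x :=
    mul_entries_nonneg (mul_entries_nonneg hT.1 hP) hW.1
  have hTQ : ∀ y x, 0 ≤ (T * Q * W) y x :=
    mul_entries_nonneg (mul_entries_nonneg hT.1 hQ) hW.1
  rw [JSD_eq_sqrt_sumF _ _ (fun y => hTP y x'') (fun y => hTQ y x'')]
  have hsup0 : 0 ≤ supJSD P Q := supJSD_nonneg P Q
  rw [show supJSD P Q = Real.sqrt ((supJSD P Q) ^ 2) from (Real.sqrt_sq hsup0).symm]
  apply Real.sqrt_le_sqrt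
  -- entry formula
  have hentry : ∀ (R : Matrix Y' X' ℝ) (y'' : Y''),
      (T * R * W) y'' x'' = ∑ z : X' × Y', (T y'' z.2 * W z.1 x'') * R z.2 z.1 := by
    intro R y''
    rw [Matrix.mul_apply]
    rw [Fintype.sum_prod_type]
    apply Finset.sum_congr rfl
    intro x' _
    rw [Matrix.mul_apply, Finset.sum_mul]
    apply Finset.sum_congr rfl
    intro y' _
    ring
  have step1 : ∀ y'', F ((T * P * W) y'' x'') ((T * Q * W) y'' x'')
      ≤ ∑ z : X' × Y', (T y'' z.2 * W z.1 x'') * F (P z.2 z.1) (Q z.2 z.1) := by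
    intro y''
    rw [hentry P y'', hentry Q y'']
    calc F (∑ z : X' × Y', (T y'' z.2 * W z.1 x'') * P z.2 z.1)
          (∑ z : X' × Y', (T y'' z.2 * W z.1 x'') * Q z.2 z.1)
        ≤ ∑ z : X' × Y', F ((T y'' z.2 * W z.1 x'') * P z.2 z.1)
            ((T y'' z.2 * W z.1 x'') * Q z.2 z.1) := by
          apply F_subadd
          · intro z
            exact mul_nonneg (mul_nonneg (hT.1 _ _) (hW.1 _ _)) (hP _ _)
          · intro z
            exact mul_nonneg (mul_nonneg (hT.1 _ _) (hW.1 _ _)) (hQ _ _)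
      _ = ∑ z : X' × Y', (T y'' z.2 * W z.1 x'') * F (P z.2 z.1) (Q z.2 z.1) := by
          apply Finset.sum_congr rfl
          intro z _
          exact F_homog (mul_nonneg (hT.1 _ _) (hW.1 _ _)) _ _
  calc ∑ y'', F ((T * P * W) y'' x'') ((T * Q * W) y'' x'')
      ≤ ∑ y'', ∑ z : X' × Y', (T y'' z.2 * W z.1 x'') * F (P z.2 z.1) (Q z.2 z.1) :=
        Finset.sum_le_sum fun y'' _ => step1 y''
    _ = ∑ z : X' × Y', (∑ y'', T y'' z.2) * (W z.1 x'' * F (P z.2 z.1) (Q z.2 z.1)) := by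
        rw [Finset.sum_comm]
        apply Finset.sum_congr rfl
        intro z _
        rw [Finset.sum_mul]
        apply Finset.sum_congr rfl
        intro y'' _
        ring
    _ = ∑ z : X' × Y', W z.1 x'' * F (P z.2 z.1) (Q z.2 z.1) := by
        apply Finset.sum_congr rfl
        intro z _
        rw [hT.2 z.2, one_mul]
    _ = ∑ x', W x' x'' * ∑ y', F (P y' x') (Q y' x') := by
        rw [Fintype.sum_prod_type]
        apply Finset.sum_congr rfl
        intro x' _
        rw [Finset.mul_sum]
    _ ≤ ∑ x', W x' x'' * (supJSD P Q) ^ 2 := by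
        apply Finset.sum_le_sum
        intro x' _
        apply mul_le_mul_of_nonneg_left _ (hW.1 x' x'')
        have hJ : JSD (fun y' => P y' x') (fun y' => Q y' x') ≤ supJSD P Q := by
          unfold supJSD
          exact Finset.le_sup' (fun x' => JSD (fun y' => P y' x') (fun y' => Q y' x')) (Finset.mem_univ x')
        have hJe : JSD (fun y' => P y' x') (fun y' => Q y' x')
            = Real.sqrt (∑ y', F (P y' x') (Q y' x')) :=
          JSD_eq_sqrt_sumF _ _ (fun y => hP y x') (fun y => hQ y x')
        have hsum0 : 0 ≤ ∑ y', F (P y' x') (Q y' x') :=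
          Finset.sum_nonneg fun y' _ => F_nonneg (hP y' x') (hQ y' x')
        calc ∑ y', F (P y' x') (Q y' x')
            = (Real.sqrt (∑ y', F (P y' x') (Q y' x'))) ^ 2 := (Real.sq_sqrt hsum0).symm
          _ ≤ (supJSD P Q) ^ 2 := by
              apply pow_le_pow_left₀ (Real.sqrt_nonneg _)
              rw [← hJe]; exact hJ
    _ = (supJSD P Q) ^ 2 := by
        rw [← Finset.sum_mul, hW.2 x'', one_mul]


end IsilAux

open IsilAux in
theorem isil_triangle {X X' X'' Y Y' Y'' : Type*}
    [Fintype X] [Nonempty X] [Fintype X'] [Nonempty X'] [Fintype X''] [Nonempty X'']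
    [Fintype Y] [Nonempty Y] [Fintype Y'] [Nonempty Y'] [Fintype Y''] [Nonempty Y'']
    [DecidableEq X'] [DecidableEq X'']
    (μ : Matrix Y X ℝ) (μ' : Matrix Y' X' ℝ) (μ'' : Matrix Y'' X'' ℝ)
    (αX : Matrix X' X ℝ) (αY : Matrix Y' Y ℝ)
    (βX : Matrix X'' X' ℝ) (βY : Matrix Y'' Y' ℝ)
    (hμ : IsColStoch μ) (hμ' : IsColStoch μ') (hμ'' : IsColStoch μ'')
    (hαX : IsAbsMatrix αX) (hαY : IsAbsMatrix αY)
    (hβX : IsAbsMatrix βX) (hβY : IsAbsMatrix βY) :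
    supJSD μ'' (βY * αY * μ * pinv αX * pinv βX)
      ≤ supJSD μ' (αY * μ * pinv αX) + supJSD μ'' (βY * μ' * pinv βX) := by
  classical
  set M : Matrix Y' X' ℝ := αY * μ * pinv αX with hM
  set B : Matrix Y'' X'' ℝ := βY * μ' * pinv βX with hB
  set C : Matrix Y'' X'' ℝ := βY * M * pinv βX with hC
  have hassoc : βY * αY * μ * pinv αX * pinv βX = C := by
    rw [hC, hM]
    simp only [Matrix.mul_assoc]
  rw [hassoc]
  -- nonnegativity of entries
  have hαXp := pinv_colStoch hαX
  have hβXp := pinv_colStoch hβX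
  have hαYc := abs_colStoch hαY
  have hβYc := abs_colStoch hβY
  have hMn : ∀ y x, 0 ≤ M y x :=
    mul_entries_nonneg (mul_entries_nonneg hαYc.1 hμ.1) hαXp.1
  have hBn : ∀ y x, 0 ≤ B y x :=
    mul_entries_nonneg (mul_entries_nonneg hβYc.1 hμ'.1) hβXp.1
  have hCn : ∀ y x, 0 ≤ C y x :=
    mul_entries_nonneg (mul_entries_nonneg hβYc.1 hMn) hβXp.1
  -- bound each column
  have key : ∀ x'' : X'',
      JSD (fun y => μ'' y x'') (fun y => C y x'')
        ≤ supJSD μ' M + supJSD μ'' B := by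
    intro x''
    have htri : JSD (fun y => μ'' y x'') (fun y => C y x'')
        ≤ JSD (fun y => μ'' y x'') (fun y => B y x'')
          + JSD (fun y => B y x'') (fun y => C y x'') :=
      JSD_tri _ _ _ (fun y => hμ''.1 y x'') (fun y => hBn y x'') (fun y => hCn y x'')
    have h1 : JSD (fun y => μ'' y x'') (fun y => B y x'') ≤ supJSD μ'' B := by
      unfold supJSD
      exact Finset.le_sup' (fun x => JSD (fun y => μ'' y x) (fun y => B y x))
        (Finset.mem_univ x'')
    have h2 : JSD (fun y => B y x'') (fun y => C y x'') ≤ supJSD μ' M := by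
      have := mix_bound βY (pinv βX) μ' M hβYc hβXp hμ'.1 hMn x''
      rw [hB, hC] at *
      exact this
    linarith
  unfold supJSD
  apply Finset.sup'_le
  intro x'' _
  exact key x''
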